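/- Let d ≥ 1 and let X_q, X_p : ℝ^d × ℝ^d → ℝ^d be continuously differentiable maps satisfying, at every point (x,y) ∈ ℝ^d × ℝ^d, the Hamiltonian Helmholtz conditions: ∂X_q/∂x(x,y) + (∂X_p/∂y(x,y))ᵀ = 0, and the d × d matrices ∂X_q/∂y(x,y) and ∂X_p/∂x(x,y) are symmetric. Define H : ℝ^d × ℝ^d → ℝ by H(x,y) = ∫₀¹ ( ⟨y, X_q(λx, λy)⟩ − ⟨x, X_p(λx, λy)⟩ ) dλ. Then H is differentiable and for every (x,y) ∈ ℝ^d × ℝ^d one has ∂H/∂y(x,y) = X_q(x,y) and ∂H/∂x(x,y) = −X_p(x,y); in particular, X = (X_q, X_p) is a Hamiltonian vector field with Hamiltonian H. -/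

import Mathlib

open scoped RealInnerProductSpace

/-- The Jacobian block of the total derivative of `F` at `z` corresponding to the
first factor (`∂F/∂x(z)`), as a continuous linear map. -/
noncomputable def pderivFst {d m : ℕ}
    (F : EuclideanSpace ℝ (Fin d) × EuclideanSpace ℝ (Fin d) → EuclideanSpace ℝ (Fin m))
    (z : EuclideanSpace ℝ (Fin d) × EuclideanSpace ℝ (Fin d)) :
    EuclideanSpace ℝ (Fin d) →L[ℝ] EuclideanSpace ℝ (Fin m) :=
  (fderiv ℝ F z).comp (ContinuousLinearMap.inl ℝ _ _)

/-- The Jacobian block of the total derivative of `F` at `z` corresponding to the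
second factor (`∂F/∂y(z)`), as a continuous linear map. -/
noncomputable def pderivSnd {d m : ℕ}
    (F : EuclideanSpace ℝ (Fin d) × EuclideanSpace ℝ (Fin d) → EuclideanSpace ℝ (Fin m))
    (z : EuclideanSpace ℝ (Fin d) × EuclideanSpace ℝ (Fin d)) :
    EuclideanSpace ℝ (Fin d) →L[ℝ] EuclideanSpace ℝ (Fin m) :=
  (fderiv ℝ F z).comp (ContinuousLinearMap.inr ℝ _ _)

/-- The Hamiltonian Helmholtz conditions for the pair `X = (Xq, Xp)`:
`∂Xq/∂x + (∂Xp/∂y)ᵀ = 0`, and `∂Xq/∂y`, `∂Xp/∂x` are symmetric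
(transposition being the adjoint with respect to the Euclidean inner product). -/
def HelmholtzConditions {d : ℕ}
    (Xq Xp : EuclideanSpace ℝ (Fin d) × EuclideanSpace ℝ (Fin d) → EuclideanSpace ℝ (Fin d)) :
    Prop :=
  ∀ z : EuclideanSpace ℝ (Fin d) × EuclideanSpace ℝ (Fin d),
    pderivFst Xq z + ContinuousLinearMap.adjoint (pderivSnd Xp z) = 0 ∧
    ContinuousLinearMap.adjoint (pderivSnd Xq z) = pderivSnd Xq z ∧
    ContinuousLinearMap.adjoint (pderivFst Xp z) = pderivFst Xp z

/-- `X = (Xq, Xp)` is a Hamiltonian vector field: there is a twice continuously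
differentiable `H` with `Xq = ∂H/∂y` and `Xp = −∂H/∂x` (partial gradients). -/
def IsHamiltonianPair {d : ℕ}
    (Xq Xp : EuclideanSpace ℝ (Fin d) × EuclideanSpace ℝ (Fin d) → EuclideanSpace ℝ (Fin d)) :
    Prop :=
  ∃ H : EuclideanSpace ℝ (Fin d) × EuclideanSpace ℝ (Fin d) → ℝ,
    ContDiff ℝ 2 H ∧
    ∀ z : EuclideanSpace ℝ (Fin d) × EuclideanSpace ℝ (Fin d),
      HasGradientAt (fun y => H (z.1, y)) (Xq z) z.2 ∧
      HasGradientAt (fun x => H (x, z.2)) (-(Xp z)) z.1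

section HamiltonianAux

open ContinuousLinearMap

variable {d : ℕ}
local notation "E" => EuclideanSpace ℝ (Fin d)

/-- The pointwise derivative (in the parameter `ζ`) of the integrand. -/
noncomputable def hamPhi (Xq Xp : E × E → E) (l : ℝ) (ζ : E × E) : (E × E) →L[ℝ] ℝ :=
  ((innerSL ℝ (Xq (l • ζ))).comp (snd ℝ E E)
    + l • ((innerSL ℝ ζ.2).comp (fderiv ℝ Xq (l • ζ))))
  - ((innerSL ℝ (Xp (l • ζ))).comp (fst ℝ E E)
    + l • ((innerSL ℝ ζ.1).comp (fderiv ℝ Xp (l • ζ))))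

theorem hamPhi_apply (Xq Xp : E × E → E) (l : ℝ) (ζ w : E × E) :
    hamPhi Xq Xp l ζ w = ⟪Xq (l • ζ), w.2⟫ + l * ⟪ζ.2, (fderiv ℝ Xq (l • ζ)) w⟫
      - (⟪Xp (l • ζ), w.1⟫ + l * ⟪ζ.1, (fderiv ℝ Xp (l • ζ)) w⟫) := by
  simp only [hamPhi, ContinuousLinearMap.sub_apply, ContinuousLinearMap.add_apply,
    ContinuousLinearMap.coe_comp', Function.comp_apply, ContinuousLinearMap.coe_smul',
    Pi.smul_apply, innerSL_apply_apply, ContinuousLinearMap.coe_snd', ContinuousLinearMap.coe_fst',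
    smul_eq_mul]

theorem hamPhi_hasFDerivAt (Xq Xp : E × E → E)
    (hXq : ContDiff ℝ 1 Xq) (hXp : ContDiff ℝ 1 Xp) (l : ℝ) (ζ : E × E) :
    HasFDerivAt (fun ζ : E × E =>
        (⟪ζ.2, Xq (l • ζ.1, l • ζ.2)⟫ - ⟪ζ.1, Xp (l • ζ.1, l • ζ.2)⟫ : ℝ))
      (hamPhi Xq Xp l ζ) ζ := by
  have hsm : HasFDerivAt (fun ζ : E × E => l • ζ) (l • ContinuousLinearMap.id ℝ (E × E)) ζ :=
    (hasFDerivAt_id ζ).const_smul l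
  have hq : HasFDerivAt (fun ζ : E × E => Xq (l • ζ))
      ((fderiv ℝ Xq (l • ζ)).comp (l • ContinuousLinearMap.id ℝ (E × E))) ζ :=
    ((hXq.differentiable one_ne_zero _).hasFDerivAt).comp ζ hsm
  have hp : HasFDerivAt (fun ζ : E × E => Xp (l • ζ))
      ((fderiv ℝ Xp (l • ζ)).comp (l • ContinuousLinearMap.id ℝ (E × E))) ζ :=
    ((hXp.differentiable one_ne_zero _).hasFDerivAt).comp ζ hsm
  have h := ((hasFDerivAt_snd (𝕜 := ℝ) (p := ζ)).inner ℝ hq).sub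
    ((hasFDerivAt_fst (𝕜 := ℝ) (p := ζ)).inner ℝ hp)
  have heq : ((fderivInnerCLM ℝ (ζ.2, Xq (l • ζ))).comp
        ((snd ℝ E E).prod ((fderiv ℝ Xq (l • ζ)).comp (l • ContinuousLinearMap.id ℝ (E × E)))) -
      (fderivInnerCLM ℝ (ζ.1, Xp (l • ζ))).comp
        ((fst ℝ E E).prod ((fderiv ℝ Xp (l • ζ)).comp (l • ContinuousLinearMap.id ℝ (E × E)))))
      = hamPhi Xq Xp l ζ := by
    refine ContinuousLinearMap.ext fun w => ?_
    simp only [hamPhi_apply, ContinuousLinearMap.sub_apply, ContinuousLinearMap.coe_comp',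
      Function.comp_apply, prod_apply, fderivInnerCLM_apply, ContinuousLinearMap.coe_snd',
      ContinuousLinearMap.coe_fst', ContinuousLinearMap.coe_smul', Pi.smul_apply,
      ContinuousLinearMap.coe_id, id_eq, map_smul, real_inner_smul_right,
      ContinuousLinearMap.id_apply]
    rw [real_inner_comm w.2, real_inner_comm w.1]
    ring
  exact heq ▸ h

theorem hamPhi_continuous (Xq Xp : E × E → E)
    (hXq : ContDiff ℝ 1 Xq) (hXp : ContDiff ℝ 1 Xp) (ζ : E × E) :
    Continuous fun l : ℝ => hamPhi Xq Xp l ζ := by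
  have hline : Continuous fun l : ℝ => l • ζ := continuous_id.smul continuous_const
  have c1 : Continuous fun l : ℝ => Xq (l • ζ) := hXq.continuous.comp hline
  have c2 : Continuous fun l : ℝ => fderiv ℝ Xq (l • ζ) :=
    (hXq.continuous_fderiv one_ne_zero).comp hline
  have c3 : Continuous fun l : ℝ => Xp (l • ζ) := hXp.continuous.comp hline
  have c4 : Continuous fun l : ℝ => fderiv ℝ Xp (l • ζ) :=
    (hXp.continuous_fderiv one_ne_zero).comp hline
  exact ((((innerSL ℝ).continuous.comp c1).clm_comp continuous_const).add
    (continuous_id.smul (continuous_const.clm_comp c2))).sub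
    ((((innerSL ℝ).continuous.comp c3).clm_comp continuous_const).add
      (continuous_id.smul (continuous_const.clm_comp c4)))

theorem fderiv_decomp (F : E × E → E) (p u : E × E) :
    fderiv ℝ F p u = pderivFst F p u.1 + pderivSnd F p u.2 := by
  have hu : u = ((u.1, (0:E)) : E × E) + (((0:E), u.2) : E × E) := by
    simp [Prod.ext_iff]
  calc fderiv ℝ F p u = fderiv ℝ F p ((u.1, (0:E)) + ((0:E), u.2)) := by rw [← hu]
    _ = fderiv ℝ F p (u.1, (0:E)) + fderiv ℝ F p ((0:E), u.2) := map_add _ _ _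
    _ = pderivFst F p u.1 + pderivSnd F p u.2 := rfl

theorem symm_of_helm (Xq Xp : E × E → E) (helm : HelmholtzConditions Xq Xp)
    (p v w : E × E) :
    ⟪v.2, fderiv ℝ Xq p w⟫ - ⟪v.1, fderiv ℝ Xp p w⟫
      = ⟪w.2, fderiv ℝ Xq p v⟫ - ⟪w.1, fderiv ℝ Xp p v⟫ := by
  obtain ⟨h1, h2, h3⟩ := helm p
  have hAq : pderivFst Xq p = -(ContinuousLinearMap.adjoint (pderivSnd Xp p)) := by
    rw [← add_eq_zero_iff_eq_neg]; exact h1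
  have fq : ∀ a b : E, ⟪a, pderivSnd Xq p b⟫ = ⟪b, pderivSnd Xq p a⟫ := by
    intro a b
    rw [← h2, ContinuousLinearMap.adjoint_inner_right, real_inner_comm]
    rw [h2]
  have fp : ∀ a b : E, ⟪a, pderivFst Xp p b⟫ = ⟪b, pderivFst Xp p a⟫ := by
    intro a b
    rw [← h3, ContinuousLinearMap.adjoint_inner_right, real_inner_comm]
    rw [h3]
  have cross : ∀ a b : E, ⟪a, pderivFst Xq p b⟫ = -⟪b, pderivSnd Xp p a⟫ := by
    intro a b
    rw [hAq]
    simp only [ContinuousLinearMap.neg_apply, inner_neg_right,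
      ContinuousLinearMap.adjoint_inner_right]
    rw [real_inner_comm]
  rw [fderiv_decomp Xq p w, fderiv_decomp Xp p w, fderiv_decomp Xq p v, fderiv_decomp Xp p v]
  simp only [inner_add_right]
  rw [fq w.2 v.2, fp w.1 v.1, cross v.2 w.1, cross w.2 v.1]
  ring


noncomputable def hamL (Xq Xp : E × E → E) (z : E × E) : (E × E) →L[ℝ] ℝ :=
  (innerSL ℝ (Xq z)).comp (snd ℝ E E) - (innerSL ℝ (Xp z)).comp (fst ℝ E E)

theorem hamL_apply (Xq Xp : E × E → E) (z w : E × E) :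
    hamL Xq Xp z w = ⟪Xq z, w.2⟫ - ⟪Xp z, w.1⟫ := by
  simp only [hamL, ContinuousLinearMap.sub_apply, ContinuousLinearMap.coe_comp',
    Function.comp_apply, innerSL_apply_apply, ContinuousLinearMap.coe_snd',
    ContinuousLinearMap.coe_fst']

theorem hamPhi_integral (Xq Xp : E × E → E)
    (hXq : ContDiff ℝ 1 Xq) (hXp : ContDiff ℝ 1 Xp) (helm : HelmholtzConditions Xq Xp)
    (z : E × E) :
    (∫ l in (0:ℝ)..(1:ℝ), hamPhi Xq Xp l z) = hamL Xq Xp z := by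
  have hPhiInt : IntervalIntegrable (fun l => hamPhi Xq Xp l z) MeasureTheory.volume 0 1 :=
    (hamPhi_continuous Xq Xp hXq hXp z).intervalIntegrable 0 1
  refine ContinuousLinearMap.ext fun w => ?_
  rw [ContinuousLinearMap.intervalIntegral_apply hPhiInt w]
  have key : ∀ l ∈ Set.uIcc (0:ℝ) (1:ℝ),
      HasDerivAt (fun l : ℝ => l * ((⟪Xq (l • z), w.2⟫ : ℝ) - ⟪Xp (l • z), w.1⟫))
        (hamPhi Xq Xp l z w) l := by
    intro l _
    have hline : HasDerivAt (fun l : ℝ => l • z) z l := by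
      simpa using (hasDerivAt_id l).smul_const z
    have hq : HasDerivAt (fun l : ℝ => Xq (l • z)) ((fderiv ℝ Xq (l • z)) z) l :=
      ((hXq.differentiable one_ne_zero _).hasFDerivAt).comp_hasDerivAt l hline
    have hp : HasDerivAt (fun l : ℝ => Xp (l • z)) ((fderiv ℝ Xp (l • z)) z) l :=
      ((hXp.differentiable one_ne_zero _).hasFDerivAt).comp_hasDerivAt l hline
    have hinq : HasDerivAt (fun l : ℝ => (⟪Xq (l • z), w.2⟫ : ℝ))
        (⟪(fderiv ℝ Xq (l • z)) z, w.2⟫) l := by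
      simpa using hq.inner ℝ (hasDerivAt_const l w.2)
    have hinp : HasDerivAt (fun l : ℝ => (⟪Xp (l • z), w.1⟫ : ℝ))
        (⟪(fderiv ℝ Xp (l • z)) z, w.1⟫) l := by
      simpa using hp.inner ℝ (hasDerivAt_const l w.1)
    have hg := (hasDerivAt_id l).mul (hinq.sub hinp)
    have hgoal : (1 : ℝ) * ((⟪Xq (l • z), w.2⟫ : ℝ) - ⟪Xp (l • z), w.1⟫) +
        l * ((⟪(fderiv ℝ Xq (l • z)) z, w.2⟫ : ℝ) - ⟪(fderiv ℝ Xp (l • z)) z, w.1⟫)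
        = hamPhi Xq Xp l z w := by
      have hsy := symm_of_helm Xq Xp helm (l • z) z w
      rw [hamPhi_apply]
      linear_combination -l * hsy - l * real_inner_comm ((fderiv ℝ Xq (l • z)) z) w.2
        + l * real_inner_comm ((fderiv ℝ Xp (l • z)) z) w.1
    rw [← hgoal]
    exact hg
  have hcont : IntervalIntegrable (fun l => hamPhi Xq Xp l z w)
      MeasureTheory.volume 0 1 :=
    ((hamPhi_continuous Xq Xp hXq hXp z).clm_apply continuous_const).intervalIntegrable 0 1
  rw [intervalIntegral.integral_eq_sub_of_hasDerivAt key hcont]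
  rw [hamL_apply]
  simp

theorem ham_main (Xq Xp : E × E → E)
    (hXq : ContDiff ℝ 1 Xq) (hXp : ContDiff ℝ 1 Xp) (helm : HelmholtzConditions Xq Xp)
    (H : E × E → ℝ)
    (hHdef : ∀ z : E × E,
      H z = ∫ l in (0:ℝ)..(1:ℝ),
        (⟪z.2, Xq (l • z.1, l • z.2)⟫ - ⟪z.1, Xp (l • z.1, l • z.2)⟫))
    (z : E × E) : HasFDerivAt H (hamL Xq Xp z) z := by
  have hFcont : ∀ ζ : E × E, Continuous fun l : ℝ =>
      ((⟪ζ.2, Xq (l • ζ.1, l • ζ.2)⟫ - ⟪ζ.1, Xp (l • ζ.1, l • ζ.2)⟫ : ℝ)) := by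
    intro ζ
    have hline : Continuous fun l : ℝ => ((l • ζ.1, l • ζ.2) : E × E) :=
      (continuous_id.smul continuous_const).prodMk (continuous_id.smul continuous_const)
    exact (Continuous.inner (𝕜 := ℝ) continuous_const (hXq.continuous.comp hline)).sub
      (Continuous.inner (𝕜 := ℝ) continuous_const (hXp.continuous.comp hline))
  -- bounds on a compact set
  set R : ℝ := ‖z‖ + 1 with hRdef
  have hR0 : (0:ℝ) ≤ R := by positivity
  have hK : IsCompact (Metric.closedBall (0 : E × E) R) := isCompact_closedBall _ _
  obtain ⟨C1, hC1⟩ := hK.exists_bound_of_continuousOn hXq.continuous.continuousOn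
  obtain ⟨C2, hC2⟩ := hK.exists_bound_of_continuousOn hXp.continuous.continuousOn
  obtain ⟨C3, hC3⟩ := hK.exists_bound_of_continuousOn
    (hXq.continuous_fderiv one_ne_zero).continuousOn
  obtain ⟨C4, hC4⟩ := hK.exists_bound_of_continuousOn
    (hXp.continuous_fderiv one_ne_zero).continuousOn
  have h0K : (0 : E × E) ∈ Metric.closedBall (0 : E × E) R := by
    simp [hR0]
  have hC10 : (0:ℝ) ≤ C1 := le_trans (norm_nonneg _) (hC1 0 h0K)
  have hC20 : (0:ℝ) ≤ C2 := le_trans (norm_nonneg _) (hC2 0 h0K)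
  have hC30 : (0:ℝ) ≤ C3 := le_trans (norm_nonneg _) (hC3 0 h0K)
  have hC40 : (0:ℝ) ≤ C4 := le_trans (norm_nonneg _) (hC4 0 h0K)
  set C : ℝ := C1 + C2 + R * C3 + R * C4 with hCdef
  have hbound : ∀ l : ℝ, l ∈ Set.uIoc (0:ℝ) 1 → ∀ ζ ∈ Metric.ball z 1,
      ‖hamPhi Xq Xp l ζ‖ ≤ C := by
    intro l hl ζ hζ
    have hζR : ‖ζ‖ ≤ R := by
      have h1 : ‖ζ‖ - ‖z‖ ≤ ‖ζ - z‖ := norm_sub_norm_le _ _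
      have h2 : ‖ζ - z‖ < 1 := by
        rw [← dist_eq_norm]; exact Metric.mem_ball.mp hζ
      rw [hRdef]; linarith
    have hlabs : |l| ≤ 1 := by
      rw [Set.uIoc_of_le (by norm_num : (0:ℝ) ≤ 1)] at hl
      rw [abs_le]; exact ⟨by linarith [hl.1], hl.2⟩
    have hmem' : (l • ζ) ∈ Metric.closedBall (0 : E × E) R := by
      rw [Metric.mem_closedBall, dist_zero_right, norm_smul]
      calc ‖l‖ * ‖ζ‖ ≤ 1 * R :=
            mul_le_mul hlabs hζR (norm_nonneg _) zero_le_one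
        _ = R := one_mul R
    refine ContinuousLinearMap.opNorm_le_bound _ (by positivity) fun w => ?_
    rw [hamPhi_apply, Real.norm_eq_abs]
    have e1 : |(⟪Xq (l • ζ), w.2⟫ : ℝ)| ≤ C1 * ‖w‖ :=
      le_trans (abs_real_inner_le_norm _ _)
        (mul_le_mul (hC1 _ hmem') (norm_snd_le w) (norm_nonneg _) hC10)
    have e3 : |(⟪Xp (l • ζ), w.1⟫ : ℝ)| ≤ C2 * ‖w‖ :=
      le_trans (abs_real_inner_le_norm _ _)
        (mul_le_mul (hC2 _ hmem') (norm_fst_le w) (norm_nonneg _) hC20)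
    have hq' : ‖(fderiv ℝ Xq (l • ζ)) w‖ ≤ C3 * ‖w‖ :=
      le_trans (ContinuousLinearMap.le_opNorm _ _)
        (mul_le_mul_of_nonneg_right (hC3 _ hmem') (norm_nonneg _))
    have hp' : ‖(fderiv ℝ Xp (l • ζ)) w‖ ≤ C4 * ‖w‖ :=
      le_trans (ContinuousLinearMap.le_opNorm _ _)
        (mul_le_mul_of_nonneg_right (hC4 _ hmem') (norm_nonneg _))
    have e2 : |l * (⟪ζ.2, (fderiv ℝ Xq (l • ζ)) w⟫ : ℝ)| ≤ R * (C3 * ‖w‖) := by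
      rw [abs_mul]
      calc |l| * |(⟪ζ.2, (fderiv ℝ Xq (l • ζ)) w⟫ : ℝ)|
          ≤ 1 * (‖ζ.2‖ * ‖(fderiv ℝ Xq (l • ζ)) w‖) :=
            mul_le_mul hlabs (abs_real_inner_le_norm _ _) (abs_nonneg _) zero_le_one
        _ = ‖ζ.2‖ * ‖(fderiv ℝ Xq (l • ζ)) w‖ := one_mul _
        _ ≤ R * (C3 * ‖w‖) :=
            mul_le_mul (le_trans (norm_snd_le ζ) hζR) hq' (norm_nonneg _) hR0
    have e4 : |l * (⟪ζ.1, (fderiv ℝ Xp (l • ζ)) w⟫ : ℝ)| ≤ R * (C4 * ‖w‖) := by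
      rw [abs_mul]
      calc |l| * |(⟪ζ.1, (fderiv ℝ Xp (l • ζ)) w⟫ : ℝ)|
          ≤ 1 * (‖ζ.1‖ * ‖(fderiv ℝ Xp (l • ζ)) w‖) :=
            mul_le_mul hlabs (abs_real_inner_le_norm _ _) (abs_nonneg _) zero_le_one
        _ = ‖ζ.1‖ * ‖(fderiv ℝ Xp (l • ζ)) w‖ := one_mul _
        _ ≤ R * (C4 * ‖w‖) :=
            mul_le_mul (le_trans (norm_fst_le ζ) hζR) hp' (norm_nonneg _) hR0
    calc |⟪Xq (l • ζ), w.2⟫ + l * ⟪ζ.2, (fderiv ℝ Xq (l • ζ)) w⟫ -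
            (⟪Xp (l • ζ), w.1⟫ + l * ⟪ζ.1, (fderiv ℝ Xp (l • ζ)) w⟫)|
        ≤ |⟪Xq (l • ζ), w.2⟫ + l * ⟪ζ.2, (fderiv ℝ Xq (l • ζ)) w⟫| +
            |⟪Xp (l • ζ), w.1⟫ + l * ⟪ζ.1, (fderiv ℝ Xp (l • ζ)) w⟫| := abs_sub _ _
      _ ≤ (|⟪Xq (l • ζ), w.2⟫| + |l * ⟪ζ.2, (fderiv ℝ Xq (l • ζ)) w⟫|) +
            (|⟪Xp (l • ζ), w.1⟫| + |l * ⟪ζ.1, (fderiv ℝ Xp (l • ζ)) w⟫|) :=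
          add_le_add (abs_add_le _ _) (abs_add_le _ _)
      _ ≤ (C1 * ‖w‖ + R * (C3 * ‖w‖)) + (C2 * ‖w‖ + R * (C4 * ‖w‖)) :=
          add_le_add (add_le_add e1 e2) (add_le_add e3 e4)
      _ = C * ‖w‖ := by rw [hCdef]; ring
  have hdom := intervalIntegral.hasFDerivAt_integral_of_dominated_of_fderiv_le
    (F := fun (ζ : E × E) (l : ℝ) =>
      ((⟪ζ.2, Xq (l • ζ.1, l • ζ.2)⟫ - ⟪ζ.1, Xp (l • ζ.1, l • ζ.2)⟫ : ℝ)))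
    (F' := fun ζ l => hamPhi Xq Xp l ζ) (x₀ := z) (a := 0) (b := 1)
    (μ := MeasureTheory.volume) (bound := fun _ => C) (Metric.ball_mem_nhds z one_pos)
    (Filter.Eventually.of_forall fun ζ => (hFcont ζ).aestronglyMeasurable)
    ((hFcont z).intervalIntegrable 0 1)
    ((hamPhi_continuous Xq Xp hXq hXp z).aestronglyMeasurable)
    (Filter.Eventually.of_forall fun l hl ζ hζ => hbound l hl ζ hζ)
    (intervalIntegrable_const)
    (Filter.Eventually.of_forall fun l _ ζ _ => hamPhi_hasFDerivAt Xq Xp hXq hXp l ζ)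
  rw [hamPhi_integral Xq Xp hXq hXp helm z] at hdom
  exact hdom.congr_of_eventuallyEq (Filter.Eventually.of_forall fun ζ => hHdef ζ)


end HamiltonianAux

theorem hamiltonian_of_helmholtz {d : ℕ} (hd : 1 ≤ d)
    (Xq Xp : EuclideanSpace ℝ (Fin d) × EuclideanSpace ℝ (Fin d) → EuclideanSpace ℝ (Fin d))
    (hXq : ContDiff ℝ 1 Xq) (hXp : ContDiff ℝ 1 Xp)
    (helm : HelmholtzConditions Xq Xp)
    (H : EuclideanSpace ℝ (Fin d) × EuclideanSpace ℝ (Fin d) → ℝ)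
    (hHdef : ∀ z : EuclideanSpace ℝ (Fin d) × EuclideanSpace ℝ (Fin d),
      H z = ∫ l in (0:ℝ)..(1:ℝ),
        (⟪z.2, Xq (l • z.1, l • z.2)⟫ - ⟪z.1, Xp (l • z.1, l • z.2)⟫)) :
    Differentiable ℝ H ∧
    ∀ z : EuclideanSpace ℝ (Fin d) × EuclideanSpace ℝ (Fin d),
      HasGradientAt (fun y => H (z.1, y)) (Xq z) z.2 ∧
      HasGradientAt (fun x => H (x, z.2)) (-(Xp z)) z.1 := by
  have hmain : ∀ z, HasFDerivAt H (hamL Xq Xp z) z :=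
    ham_main Xq Xp hXq hXp helm H hHdef
  refine ⟨fun z => (hmain z).differentiableAt, fun z => ?_⟩
  constructor
  · rw [hasGradientAt_iff_hasFDerivAt]
    have hι : HasFDerivAt (fun y : EuclideanSpace ℝ (Fin d) => ((z.1, y) :
          EuclideanSpace ℝ (Fin d) × EuclideanSpace ℝ (Fin d)))
        ((0 : EuclideanSpace ℝ (Fin d) →L[ℝ] EuclideanSpace ℝ (Fin d)).prod
          (ContinuousLinearMap.id ℝ (EuclideanSpace ℝ (Fin d)))) z.2 :=
      HasFDerivAt.prodMk (hasFDerivAt_const z.1 z.2) (hasFDerivAt_id z.2)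
    have h := (hmain z).comp z.2 hι
    have heq : (hamL Xq Xp z).comp
        ((0 : EuclideanSpace ℝ (Fin d) →L[ℝ] EuclideanSpace ℝ (Fin d)).prod
          (ContinuousLinearMap.id ℝ (EuclideanSpace ℝ (Fin d))))
        = InnerProductSpace.toDual ℝ (EuclideanSpace ℝ (Fin d)) (Xq z) := by
      refine ContinuousLinearMap.ext fun y => ?_
      simp [hamL_apply, InnerProductSpace.toDual_apply_apply]
    exact heq ▸ h
  · rw [hasGradientAt_iff_hasFDerivAt]
    have hι : HasFDerivAt (fun x : EuclideanSpace ℝ (Fin d) => ((x, z.2) :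
          EuclideanSpace ℝ (Fin d) × EuclideanSpace ℝ (Fin d)))
        ((ContinuousLinearMap.id ℝ (EuclideanSpace ℝ (Fin d))).prod
          (0 : EuclideanSpace ℝ (Fin d) →L[ℝ] EuclideanSpace ℝ (Fin d))) z.1 :=
      HasFDerivAt.prodMk (hasFDerivAt_id z.1) (hasFDerivAt_const z.2 z.1)
    have h := (hmain z).comp z.1 hι
    have heq : (hamL Xq Xp z).comp
        ((ContinuousLinearMap.id ℝ (EuclideanSpace ℝ (Fin d))).prod
          (0 : EuclideanSpace ℝ (Fin d) →L[ℝ] EuclideanSpace ℝ (Fin d)))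
        = InnerProductSpace.toDual ℝ (EuclideanSpace ℝ (Fin d)) (-(Xp z)) := by
      refine ContinuousLinearMap.ext fun x => ?_
      simp [hamL_apply, InnerProductSpace.toDual_apply_apply]
    exact heq ▸ h
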